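/- Let β > 0, γ ≥ 0, and let u, f be continuous real-valued functions on (0,∞) with 0 ≤ u ≤ 1, 0 ≤ f ≤ 1, lim_{r→0} u(r) = 1, f twice continuously differentiable on (0,∞) satisfying (r² f'(r))' = β f(r) u(r)² + γ r² f(r)(f(r)² − 1) for all r > 0, and ∫₀^∞ r² f'(r)² dr < ∞. Then lim_{r→0} f(r) = 0. -/

import Mathlib

open MeasureTheory Filter Set Topology

noncomputable section

set_option maxHeartbeats 2000000 in
/-- for a solution of `(r² f')' = β f u² + γ r² f(f²−1)` with `0 ≤ u,f ≤ 1`,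
`u → 1` at `0⁺` and finite weighted Dirichlet integral, the regularity boundary
condition `lim_{r→0⁺} f(r) = 0` holds. -/
theorem f_vanishes_at_origin (β γ : ℝ) (hβ : 0 < β) (hγ : 0 ≤ γ)
    (u f f' : ℝ → ℝ)
    (hu_cont : ContinuousOn u (Ioi 0))
    (hf_cont : ContinuousOn f (Ioi 0))
    (hu01 : ∀ r : ℝ, 0 < r → 0 ≤ u r ∧ u r ≤ 1)
    (hf01 : ∀ r : ℝ, 0 < r → 0 ≤ f r ∧ f r ≤ 1)
    (hu0 : Tendsto u (𝓝[>] (0 : ℝ)) (𝓝 1))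
    (hf' : ∀ r : ℝ, 0 < r → HasDerivAt f (f' r) r)
    (heq : ∀ r : ℝ, 0 < r →
      HasDerivAt (fun s : ℝ => s ^ 2 * f' s)
        (β * f r * u r ^ 2 + γ * r ^ 2 * f r * (f r ^ 2 - 1)) r)
    (hfin : IntegrableOn (fun r : ℝ => r ^ 2 * f' r ^ 2) (Ioi 0)) :
    Tendsto f (𝓝[>] (0 : ℝ)) (𝓝 0) := by
  set g : ℝ → ℝ := fun s => s ^ 2 * f' s with hgdef
  set E : ℝ → ℝ := fun r => β * f r * u r ^ 2 + γ * r ^ 2 * f r * (f r ^ 2 - 1) with hEdef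
  -- choose δ where u ≥ 3/4
  have hev : ∀ᶠ r in 𝓝[>] (0 : ℝ), (3 : ℝ) / 4 ≤ u r :=
    hu0.eventually (eventually_ge_nhds (by norm_num))
  obtain ⟨δ, hδmem, hδ⟩ := mem_nhdsGT_iff_exists_Ioo_subset.1 hev
  have hδpos : (0 : ℝ) < δ := hδmem
  set r₀ : ℝ := min δ (Real.sqrt (β / (4 * (γ + 1)))) with hr₀def
  have hXpos : (0 : ℝ) < β / (4 * (γ + 1)) := by positivity
  have hr₀pos : 0 < r₀ := lt_min hδpos (Real.sqrt_pos.2 hXpos)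
  -- the key lower bound on E
  have hE_lb : ∀ r ∈ Ioo (0 : ℝ) r₀, β / 4 * f r ≤ E r := by
    intro r hr
    have hrpos : 0 < r := hr.1
    have hfr := hf01 r hrpos
    have hur : (3 : ℝ) / 4 ≤ u r := hδ ⟨hrpos, lt_of_lt_of_le hr.2 (min_le_left _ _)⟩
    have hr2 : r ^ 2 ≤ β / (4 * (γ + 1)) := by
      have h1 : r < Real.sqrt (β / (4 * (γ + 1))) :=
        lt_of_lt_of_le hr.2 (min_le_right _ _)
      have h2 : r ^ 2 ≤ Real.sqrt (β / (4 * (γ + 1))) ^ 2 :=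
        pow_le_pow_left₀ hrpos.le h1.le 2
      rwa [Real.sq_sqrt hXpos.le] at h2
    have hgr2 : γ * r ^ 2 ≤ β / 4 := by
      have h3 : γ * r ^ 2 ≤ γ * (β / (4 * (γ + 1)))  :=
        mul_le_mul_of_nonneg_left hr2 hγ
      have h4 : γ * (β / (4 * (γ + 1))) ≤ β / 4 := by
        rw [show γ * (β / (4 * (γ + 1))) = (γ * β) / (4 * (γ + 1)) by ring,
          div_le_div_iff₀ (by positivity) (by norm_num : (0:ℝ) < 4)]
        nlinarith
      linarith
    have hu2 : (1:ℝ) / 2 ≤ u r ^ 2 := by nlinarith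
    have hub : β * f r * u r ^ 2 ≥ β / 2 * f r := by
      nlinarith [mul_nonneg (mul_nonneg hβ.le hfr.1) (show (0:ℝ) ≤ u r ^ 2 - 1/2 by linarith)]
    have hlb2 : γ * r ^ 2 * f r * (f r ^ 2 - 1) ≥ -(γ * r ^ 2) * f r := by
      nlinarith [mul_nonneg (mul_nonneg (mul_nonneg hγ (sq_nonneg r)) hfr.1) (sq_nonneg (f r))]
    have : -(γ * r ^ 2) * f r ≥ -(β / 4) * f r := by nlinarith
    simp only [hEdef]
    nlinarith
  have hEnn : ∀ r ∈ Ioo (0 : ℝ) r₀, 0 ≤ E r := by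
    intro r hr
    have h1 := hE_lb r hr
    have h2 := (hf01 r hr.1).1
    have h3 : 0 ≤ β / 4 * f r := mul_nonneg (by linarith) h2
    exact le_trans h3 h1
  -- g is monotone on Ioc 0 r₀
  have hgmono : MonotoneOn g (Ioc 0 r₀) := by
    apply monotoneOn_of_hasDerivWithinAt_nonneg (convex_Ioc _ _) (f' := E)
    · intro x hx
      exact ((heq x hx.1).continuousAt).continuousWithinAt
    · intro x hx
      rw [interior_Ioc] at hx
      exact ((heq x hx.1).hasDerivWithinAt)
    · intro x hx
      rw [interior_Ioc] at hx
      exact hEnn x hx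
  -- g is nonnegative on Ioc 0 r₀
  have hgnn : ∀ r ∈ Ioc (0 : ℝ) r₀, 0 ≤ g r := by
    by_contra hcon
    push_neg at hcon
    obtain ⟨a, ha, hga⟩ := hcon
    have hmon : ∀ r ∈ Ioo (0 : ℝ) a, g r ≤ g a := fun r hr =>
      hgmono ⟨hr.1, hr.2.le.trans ha.2⟩ ha hr.2.le
    have hint : IntegrableOn (fun r : ℝ => r ^ 2 * f' r ^ 2) (Ioo 0 a) :=
      hfin.mono_set (fun x hx => hx.1)
    have hint2 : IntegrableOn (fun r : ℝ => g a ^ 2 / r ^ 2) (Ioo 0 a) := by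
      refine Integrable.mono hint ?_ ?_
      · exact ((measurable_const.div ((measurable_id.pow_const 2))).aestronglyMeasurable)
      · rw [ae_restrict_iff' measurableSet_Ioo]
        filter_upwards with r hr
        have hrpos : 0 < r := hr.1
        have h1 : g r ≤ g a := hmon r hr
        have h2 : g a ^ 2 ≤ g r ^ 2 := by nlinarith
        rw [Real.norm_eq_abs, Real.norm_eq_abs, abs_of_nonneg (by positivity),
          abs_of_nonneg (by positivity)]
        rw [div_le_iff₀ (by positivity)]
        have : g r = r ^ 2 * f' r := rfl
        nlinarith [sq_nonneg (f' r), sq_nonneg r]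
    have hga2 : g a ^ 2 ≠ 0 := pow_ne_zero 2 (ne_of_lt hga)
    have hint3 : IntegrableOn (fun r : ℝ => r ^ (-2 : ℝ)) (Ioo (0:ℝ) a) := by
      have h4 := hint2.const_mul ((g a ^ 2)⁻¹)
      have h5 : IntegrableOn (fun x : ℝ => (g a ^ 2)⁻¹ * (g a ^ 2 / x ^ 2)) (Ioo 0 a) := h4
      apply h5.congr_fun _ measurableSet_Ioo
      intro x hx
      have hx0 : (0:ℝ) < x := hx.1
      show (g a ^ 2)⁻¹ * (g a ^ 2 / x ^ 2) = x ^ (-2:ℝ)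
      rw [Real.rpow_neg hx0.le]
      rw [show ((2:ℝ) = ((2:ℕ):ℝ)) by norm_num, Real.rpow_natCast]
      field_simp [ne_of_lt hga]
    rw [intervalIntegral.integrableOn_Ioo_rpow_iff ha.1] at hint3
    norm_num at hint3
  -- f is monotone on Ioo 0 r₀
  have hf'nn : ∀ r ∈ Ioo (0 : ℝ) r₀, 0 ≤ f' r := by
    intro r hr
    have h1 : 0 ≤ g r := hgnn r ⟨hr.1, hr.2.le⟩
    have : g r = r ^ 2 * f' r := rfl
    nlinarith [sq_nonneg r, pow_pos hr.1 2]
  have hfmono : MonotoneOn f (Ioo 0 r₀) := by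
    apply monotoneOn_of_hasDerivWithinAt_nonneg (convex_Ioo _ _) (f' := f')
    · intro x hx
      exact ((hf' x hx.1).continuousAt).continuousWithinAt
    · intro x hx
      rw [interior_Ioo] at hx
      exact (hf' x hx.1).hasDerivWithinAt
    · intro x hx
      rw [interior_Ioo] at hx
      exact hf'nn x hx
  have hne : (Ioo (0:ℝ) r₀).Nonempty := ⟨r₀/2, by constructor <;> linarith⟩
  have hbdd : BddBelow (f '' Ioo (0:ℝ) r₀) := by
    refine ⟨0, ?_⟩
    rintro y ⟨x, hx, rfl⟩
    exact (hf01 x hx.1).1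
  set ℓ : ℝ := sInf (f '' Ioo (0:ℝ) r₀) with hℓdef
  have hlim : Tendsto f (𝓝[>] (0:ℝ)) (𝓝 ℓ) :=
    hfmono.tendsto_nhdsWithin_Ioo_right hne hbdd
  have hℓnn : 0 ≤ ℓ := by
    apply le_csInf (hne.image _)
    rintro y ⟨x, hx, rfl⟩
    exact (hf01 x hx.1).1
  have hℓ_le : ∀ r ∈ Ioo (0:ℝ) r₀, ℓ ≤ f r := fun r hr =>
    csInf_le hbdd (mem_image_of_mem f hr)
  -- show ℓ = 0
  have hℓ0 : ℓ = 0 := by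
    by_contra hne0
    have hℓpos : 0 < ℓ := lt_of_le_of_ne hℓnn (Ne.symm hne0)
    set c : ℝ := β / 4 * ℓ with hcdef
    have hcpos : 0 < c := by positivity
    -- G := g - c * id is monotone on Ioc 0 r₀
    have hGmono : MonotoneOn (fun r => g r - c * r) (Ioc 0 r₀) := by
      apply monotoneOn_of_hasDerivWithinAt_nonneg (convex_Ioc _ _)
        (f' := fun r => E r - c)
      · intro x hx
        exact (((heq x hx.1).sub ((hasDerivAt_id x).const_mul c)).continuousAt).continuousWithinAt
      · intro x hx
        rw [interior_Ioc] at hx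
        have := (heq x hx.1).sub ((hasDerivAt_id x).const_mul c)
        exact (this.congr_deriv (by simp [hEdef])).hasDerivWithinAt
      · intro x hx
        rw [interior_Ioc] at hx
        have h1 := hE_lb x hx
        have h2 := hℓ_le x hx
        simp only [hcdef]
        nlinarith
    -- g r ≥ c * r on Ioo 0 r₀
    have hglb : ∀ r ∈ Ioo (0:ℝ) r₀, c * r ≤ g r := by
      intro r hr
      have hkey : ∀ s ∈ Ioo (0:ℝ) r, c * r - c * s ≤ g r := by
        intro s hs
        have h1 : g s - c * s ≤ g r - c * r :=
          hGmono ⟨hs.1, hs.2.le.trans hr.2.le⟩ ⟨hr.1, hr.2.le⟩ hs.2.le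
        have h2 : 0 ≤ g s := hgnn s ⟨hs.1, (hs.2.trans hr.2).le⟩
        linarith
      have ht : Tendsto (fun s : ℝ => c * r - c * s) (𝓝[>] (0:ℝ))
          (𝓝 (c * r - c * 0)) := by
        apply Tendsto.mono_left _ nhdsWithin_le_nhds
        exact tendsto_const_nhds.sub ((continuous_const.mul continuous_id).tendsto 0)
      rw [mul_zero, sub_zero] at ht
      apply le_of_tendsto ht
      filter_upwards [Ioo_mem_nhdsGT_of_mem ⟨le_refl (0:ℝ), hr.1⟩] with s hs
      exact hkey s hs
    -- h := f - c * log is monotone on Ioo 0 r₀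
    have hhmono : MonotoneOn (fun r => f r - c * Real.log r) (Ioo 0 r₀) := by
      apply monotoneOn_of_hasDerivWithinAt_nonneg (convex_Ioo _ _)
        (f' := fun r => f' r - c / r)
      · intro x hx
        exact (((hf' x hx.1).sub ((Real.hasDerivAt_log (ne_of_gt hx.1)).const_mul c)).continuousAt).continuousWithinAt
      · intro x hx
        rw [interior_Ioo] at hx
        have hld : HasDerivAt (fun r : ℝ => c * Real.log r) (c / x) x := by
          have := HasDerivAt.const_mul c (Real.hasDerivAt_log (ne_of_gt hx.1))
          simpa [div_eq_mul_inv] using this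
        exact ((hf' x hx.1).sub hld).hasDerivWithinAt
      · intro x hx
        rw [interior_Ioo] at hx
        have h1 : c * x ≤ g x := hglb x hx
        have hx2 : (0:ℝ) < x ^ 2 := pow_pos hx.1 2
        have h2 : g x = x ^ 2 * f' x := rfl
        have h3 : c / x ≤ f' x := by
          rw [div_le_iff₀ hx.1]
          have h1' : c * x ≤ x ^ 2 * f' x := by rw [← h2]; exact h1
          nlinarith [hx.1, h1']
        linarith
    -- derive contradiction
    obtain ⟨b, hb⟩ : ∃ b, b ∈ Ioo (0:ℝ) r₀ :=
      ⟨r₀ / 2, half_pos hr₀pos, half_lt_self hr₀pos⟩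
    obtain ⟨a, hapos, hab, hloga⟩ : ∃ a, 0 < a ∧ a < b ∧
        Real.log a ≤ (0 - f b) / c + Real.log b - 1 := by
      refine ⟨min (b / 2) (Real.exp ((0 - f b) / c + Real.log b - 1)), ?_, ?_, ?_⟩
      · exact lt_min (by linarith [hb.1]) (Real.exp_pos _)
      · exact lt_of_le_of_lt (min_le_left _ _) (by linarith [hb.1])
      · calc Real.log (min (b / 2) (Real.exp ((0 - f b) / c + Real.log b - 1)))
              ≤ Real.log (Real.exp ((0 - f b) / c + Real.log b - 1)) :=
            Real.log_le_log (lt_min (by linarith [hb.1]) (Real.exp_pos _)) (min_le_right _ _)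
          _ = (0 - f b) / c + Real.log b - 1 := Real.log_exp _
    have ha : a ∈ Ioo (0:ℝ) r₀ := ⟨hapos, hab.trans hb.2⟩
    have hmono : f a - c * Real.log a ≤ f b - c * Real.log b := hhmono ha hb hab.le
    have hfa : 0 ≤ f a := (hf01 a hapos).1
    have hclog : c * Real.log a ≤ -(f b) + c * Real.log b - c := by
      have := mul_le_mul_of_nonneg_left hloga hcpos.le
      have hc0 : c ≠ 0 := ne_of_gt hcpos
      field_simp at this ⊢
      nlinarith
    nlinarith
  rw [hℓ0] at hlim
  exact hlim
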